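/- Let d ≥ 5, let G be a d-regular graph, let Z ⊆ V(G) with |Z| = 2d−2, and let X ⊆ Z with |X| ≤ d−1 such that at least three vertices of X have exactly one neighbour in V(G)∖Z and every vertex of Z∖X has no neighbour in V(G)∖Z. If H is a subgraph of G that is a subdivision of K_{d+1} with branch-vertex set U (the vertices of degree d in H), then every vertex of Z ∩ U lies in X and has at least two neighbours in V(G)∖Z. -/

import Mathlib

open SimpleGraph

section Helpers

variable {β : Type*} {J : SimpleGraph β}

lemma lb_not_mem_edge {x y z : β} {w : J.Walk x y} (hz : z ∉ w.support)
    {e : Sym2 β} (he : e ∈ w.edges) : z ∉ e := by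
  intro hze
  induction e using Sym2.ind with
  | _ a b =>
    rcases Sym2.mem_iff.mp hze with rfl | rfl
    · exact hz (w.fst_mem_support_of_mem_edges he)
    · exact hz (w.snd_mem_support_of_mem_edges he)

open Classical in
lemma lb_filter_start_le_one {x y : β} (w : J.Walk x y) (hw : w.IsPath) :
    (w.edges.filter (fun e => x ∈ e)).length ≤ 1 := by
  cases w with
  | nil => simp
  | cons h w' =>
    rename_i b
    have hx : x ∉ w'.support := by
      have := hw.support_nodup
      simp [SimpleGraph.Walk.support_cons] at this
      exact this.1
    have : w'.edges.filter (fun e => x ∈ e) = [] := by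
      rw [List.filter_eq_nil_iff]
      intro e he
      simp only [decide_eq_true_eq]
      exact lb_not_mem_edge hx he
    rw [SimpleGraph.Walk.edges_cons, List.filter_cons, this]
    split <;> simp

open Classical in
lemma lb_filter_le_two {x y : β} (w : J.Walk x y) (hw : w.IsPath) (z : β) :
    (w.edges.filter (fun e => z ∈ e)).length ≤ 2 := by
  induction w with
  | nil => simp
  | cons h w' ih =>
    rename_i a b c
    have hw' : w'.IsPath := hw.of_cons
    have ha : a ∉ w'.support := by
      have := hw.support_nodup
      simp [SimpleGraph.Walk.support_cons] at this
      exact this.1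
    rw [SimpleGraph.Walk.edges_cons, List.filter_cons]
    by_cases hza : z = a
    · subst hza
      have : w'.edges.filter (fun e => z ∈ e) = [] := by
        rw [List.filter_eq_nil_iff]
        intro e he
        simp only [decide_eq_true_eq]
        exact lb_not_mem_edge ha he
      rw [this]
      split <;> simp
    · by_cases hzb : z = b
      · subst hzb
        have := lb_filter_start_le_one w' hw'
        split <;> simp <;> omega
      · have hne : z ∉ s(a, b) := by
          simp [Sym2.mem_iff, hza, hzb]
        simp only [decide_eq_true_eq, hne, if_neg, decide_eq_false hne]
        simpa using ih hw'

lemma lb_start_unique {x y : β} (w : J.Walk x y) (hw : w.IsPath) {z z' : β}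
    (hz : s(x, z) ∈ w.edges) (hz' : s(x, z') ∈ w.edges) : z = z' := by
  classical
  have h1 := lb_filter_start_le_one w hw
  have m1 : s(x, z) ∈ w.edges.filter (fun e => x ∈ e) := by
    rw [List.mem_filter]; exact ⟨hz, by simp⟩
  have m2 : s(x, z') ∈ w.edges.filter (fun e => x ∈ e) := by
    rw [List.mem_filter]; exact ⟨hz', by simp⟩
  have heq : s(x, z) = s(x, z') := by
    rcases hl : w.edges.filter (fun e => x ∈ e) with _ | ⟨e, _ | ⟨e2, t⟩⟩
    · rw [hl] at m1; simp at m1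
    · rw [hl] at m1 m2
      simp at m1 m2; rw [m1, m2]
    · rw [hl] at h1; simp at h1
  rw [Sym2.eq_iff] at heq
  rcases heq with ⟨-, h⟩ | ⟨h1', h2'⟩
  · exact h
  · rw [← h1', h2']

lemma lb_exists_crossing (S : Set β) :
    ∀ {x y : β} (w : J.Walk x y), x ∈ S → y ∉ S →
    ∃ z z', J.Adj z z' ∧ z ∈ S ∧ z' ∉ S ∧ z ∈ w.support ∧ z' ∈ w.support := by
  intro x y w
  induction w with
  | nil => intro h h'; exact absurd h h'
  | cons h w' ih =>
    rename_i a b c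
    intro hx hy
    by_cases hb : b ∈ S
    · obtain ⟨z, z', h1, h2, h3, h4, h5⟩ := ih hb hy
      exact ⟨z, z', h1, h2, h3, by simp [SimpleGraph.Walk.support_cons, h4],
        by simp [SimpleGraph.Walk.support_cons, h5]⟩
    · exact ⟨a, b, h, hx, hb, by simp, by simp [SimpleGraph.Walk.support_cons]⟩

lemma lb_path_nbrs {x y : β} (w : J.Walk x y) (hw : w.IsPath) (z : β) :
    {v : β | s(z, v) ∈ w.edges}.ncard ≤ 2 := by
  classical
  have hinj : Set.InjOn (fun v => s(z, v)) {v : β | s(z, v) ∈ w.edges} := by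
    intro v1 h1 v2 h2 hv
    simp only [Sym2.eq_iff] at hv
    rcases hv with ⟨-, h⟩ | ⟨h1', h2'⟩
    · exact h
    · rw [← h1', h2']
  have hmap : ∀ v ∈ {v : β | s(z, v) ∈ w.edges},
      (fun v => s(z, v)) v ∈ ((w.edges.filter (fun e => z ∈ e)).toFinset : Set (Sym2 β)) := by
    intro v hv
    simp only [List.coe_toFinset, Set.mem_setOf_eq, List.mem_filter]
    exact ⟨hv, by simp⟩
  calc {v : β | s(z, v) ∈ w.edges}.ncard
      ≤ (((w.edges.filter (fun e => z ∈ e)).toFinset : Set (Sym2 β))).ncard :=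
        Set.ncard_le_ncard_of_injOn _ hmap hinj (Set.toFinite _)
    _ = (w.edges.filter (fun e => z ∈ e)).toFinset.card := Set.ncard_coe_finset _
    _ ≤ (w.edges.filter (fun e => z ∈ e)).length := List.toFinset_card_le _
    _ ≤ 2 := lb_filter_le_two w hw z

end Helpers


/-- `J` is a subdivision of `H` via the branch-vertex map `f`: each edge of `H`
is replaced by a path in `J`, these paths being internally disjoint from each
other and from the branch vertices, and `J` consists exactly of these paths. -/
def IsSubdivisionOn {α β : Type*} (H : SimpleGraph α) (J : SimpleGraph β) (f : α → β) : Prop :=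
  Function.Injective f ∧
  ∃ P : ∀ ⦃u v : α⦄, H.Adj u v → J.Walk (f u) (f v),
    (∀ ⦃u v⦄ (h : H.Adj u v), (P h).IsPath) ∧
    (∀ ⦃u v⦄ (h : H.Adj u v), P h.symm = (P h).reverse) ∧
    (∀ ⦃u v⦄ (h : H.Adj u v) (w : α), f w ∈ (P h).support → w = u ∨ w = v) ∧
    (∀ ⦃u v u' v'⦄ (h : H.Adj u v) (h' : H.Adj u' v'), s(u, v) ≠ s(u', v') →
      ∀ x, x ∈ (P h).support → x ∈ (P h').support →
        (x = f u ∨ x = f v) ∧ (x = f u' ∨ x = f v')) ∧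
    (∀ x : β, (∃ u, f u = x) ∨ ∃ u v, ∃ h : H.Adj u v, x ∈ (P h).support) ∧
    (∀ ⦃x y : β⦄, J.Adj x y → ∃ u v, ∃ h : H.Adj u v, s(x, y) ∈ (P h).edges)

/-- `J` is a subdivision of `H`. -/
def IsSubdivision {α β : Type*} (H : SimpleGraph α) (J : SimpleGraph β) : Prop :=
  ∃ f : α → β, IsSubdivisionOn H J f


/-- Let `d ≥ 5`, `G` a `d`-regular graph, `Z ⊆ V(G)` with `|Z| = 2d-2`, and
`X ⊆ Z` with `|X| ≤ d-1` such that at least three vertices of `X` have exactly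
one neighbour outside `Z` and every vertex of `Z∖X` has no neighbour outside
`Z`. If `H` is a subgraph of `G` that is a subdivision of `K_{d+1}` with
branch-vertex set `U`, then every vertex of `Z ∩ U` lies in `X` and has at
least two neighbours outside `Z`. -/
theorem littlebag {V : Type*} [Fintype V] (d : ℕ) (hd : 5 ≤ d)
    (G : SimpleGraph V) (hreg : ∀ v : V, (G.neighborSet v).ncard = d)
    (Z X : Set V) (hXZ : X ⊆ Z) (hZcard : Z.ncard = 2 * d - 2)
    (hXcard : X.ncard ≤ d - 1)
    (hthree : 3 ≤ {x ∈ X | (G.neighborSet x ∩ Zᶜ).ncard = 1}.ncard)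
    (hZX : ∀ x ∈ Z \ X, G.neighborSet x ∩ Zᶜ = ∅)
    (H : G.Subgraph)
    (hsub : IsSubdivision (completeGraph (Fin (d + 1))) H.coe) :
    ∀ u ∈ Z ∩ {x : V | (H.neighborSet x).ncard = d},
      u ∈ X ∧ 2 ≤ (G.neighborSet u ∩ Zᶜ).ncard := by
  classical
  obtain ⟨f, hinj, P, hpath, hsymm, hbranch, hdisj, htotal, hedge⟩ := hsub
  -- adjacency in the complete graph is just `Ne`
  have hK : ∀ {a b : Fin (d + 1)}, a ≠ b → (completeGraph (Fin (d + 1))).Adj a b :=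
    fun h => h
  have hKne : ∀ {a b : Fin (d + 1)}, (completeGraph (Fin (d + 1))).Adj a b → a ≠ b :=
    fun h => h
  -- transfer of neighbour sets along the coercion
  have hcoeN : ∀ x : ↥H.verts,
      Subtype.val '' (H.coe.neighborSet x) = H.neighborSet ↑x := by
    intro x
    ext v
    constructor
    · rintro ⟨y, hy, rfl⟩
      exact hy
    · intro hv
      exact ⟨⟨v, (H.edge_vert (H.adj_symm hv) : v ∈ H.verts)⟩, hv, rfl⟩
  have hcard : ∀ x : ↥H.verts,
      (H.coe.neighborSet x).ncard = (H.neighborSet ↑x).ncard := by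
    intro x
    rw [← hcoeN x, Set.ncard_image_of_injective _ Subtype.val_injective]
  -- internal vertices have degree at most 2
  have hint : ∀ x : ↥H.verts, (∀ b, f b ≠ x) → (H.coe.neighborSet x).ncard ≤ 2 := by
    intro x hx
    by_cases hN : H.coe.neighborSet x = ∅
    · rw [hN]; simp
    obtain ⟨y0, hy0⟩ := Set.nonempty_iff_ne_empty.mpr hN
    obtain ⟨u0, v0, h0, he0⟩ := hedge hy0
    have hx0 : x ∈ (P h0).support := (P h0).fst_mem_support_of_mem_edges he0
    have hsub2 : H.coe.neighborSet x ⊆ {v : ↥H.verts | s(x, v) ∈ (P h0).edges} := by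
      intro y hy
      obtain ⟨u1, v1, h1, he1⟩ := hedge hy
      have hx1 : x ∈ (P h1).support := (P h1).fst_mem_support_of_mem_edges he1
      by_cases hs : s(u1, v1) = s(u0, v0)
      · rw [Sym2.eq_iff] at hs
        rcases hs with ⟨rfl, rfl⟩ | ⟨rfl, rfl⟩
        · exact he1
        · have hrev : P h0.symm = (P h0).reverse := hsymm h0
          have : P h1 = (P h0).reverse := hrev ▸ rfl
          rw [this, SimpleGraph.Walk.edges_reverse] at he1
          simpa using he1
      · rcases (hdisj h1 h0 hs x hx1 hx0).1 with h | h
        · exact absurd h.symm (hx u1)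
        · exact absurd h.symm (hx v1)
    calc (H.coe.neighborSet x).ncard
        ≤ {v : ↥H.verts | s(x, v) ∈ (P h0).edges}.ncard :=
          Set.ncard_le_ncard hsub2 (Set.toFinite _)
      _ ≤ 2 := lb_path_nbrs (P h0) (hpath h0) x
  -- branch vertices have degree exactly d
  have hbr : ∀ a : Fin (d + 1), (H.coe.neighborSet (f a)).ncard = d := by
    intro a
    have hsnd : ∀ b : Fin (d + 1), a ≠ b → ∃ sb : ↥H.verts,
        ∃ hab : (completeGraph (Fin (d + 1))).Adj a b,
        H.coe.Adj (f a) sb ∧ s(f a, sb) ∈ (P hab).edges ∧ sb ∈ (P hab).support := by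
      intro b hab'
      have hab : (completeGraph (Fin (d + 1))).Adj a b := hK hab'
      have hne : f a ≠ f b := fun h => hab' (hinj h)
      obtain ⟨sbv, hadjv, w', hw⟩ := SimpleGraph.Walk.exists_eq_cons_of_ne hne (P hab)
      refine ⟨sbv, hab, hadjv, ?_, ?_⟩
      · rw [hw]; simp [SimpleGraph.Walk.edges_cons]
      · rw [hw]; simp [SimpleGraph.Walk.support_cons]
    choose sb hab hadj hedg hsup using hsnd
    set F : Fin (d + 1) → ↥H.verts :=
      fun b => if hb : a ≠ b then sb b hb else f a with hF
    have hNeq : H.coe.neighborSet (f a) = F '' {b | a ≠ b} := by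
      ext y
      constructor
      · intro hy
        obtain ⟨u1, v1, h1, he1⟩ := hedge hy
        have hfa : f a ∈ (P h1).support := (P h1).fst_mem_support_of_mem_edges he1
        rcases hbranch h1 a hfa with rfl | rfl
        · have hane : a ≠ v1 := hKne h1
          have : y = sb v1 hane := by
            refine lb_start_unique (P h1) (hpath h1) he1 ?_
            have := hedg v1 hane
            rwa [Subsingleton.elim (hab v1 hane) h1] at this
          exact ⟨v1, hane, by rw [hF]; simp only [dif_pos hane]; exact this.symm⟩
        · have hane : a ≠ u1 := fun h => hKne h1 h.symm
          have he1' : s(f a, y) ∈ (P h1.symm).edges := by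
            rw [hsymm h1, SimpleGraph.Walk.edges_reverse]
            simpa using he1
          have : y = sb u1 hane := by
            refine lb_start_unique (P h1.symm) (hpath h1.symm) he1' ?_
            have := hedg u1 hane
            rwa [Subsingleton.elim (hab u1 hane) h1.symm] at this
          exact ⟨u1, hane, by rw [hF]; simp only [dif_pos hane]; exact this.symm⟩
      · rintro ⟨b, hb, rfl⟩
        have hb2 : a ≠ b := hb
        show F b ∈ _
        rw [hF]
        simp only [dif_pos hb2]
        exact hadj b hb2
    have hFinj : Set.InjOn F {b | a ≠ b} := by
      intro b hb b' hb' hbb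
      by_contra hne
      have hb2 : a ≠ b := hb
      have hb2' : a ≠ b' := hb'
      rw [hF] at hbb
      simp only [dif_pos hb2, dif_pos hb2'] at hbb
      have hy1 : sb b hb2 ∈ (P (hab b hb2)).support := hsup b hb2
      have hy2 : sb b hb2 ∈ (P (hab b' hb2')).support := by
        rw [hbb]; exact hsup b' hb2'
      have hsne : s(a, b) ≠ s(a, b') := by
        intro hcontra
        rw [Sym2.eq_iff] at hcontra
        rcases hcontra with ⟨-, h⟩ | ⟨h1, h2⟩
        · exact hne h
        · exact hb2' h1
      have hc := hdisj (hab b hb2) (hab b' hb2') hsne _ hy1 hy2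
      have hnfa : sb b hb2 ≠ f a := (hadj b hb2).ne'
      rcases hc with ⟨h1 | h1, h2 | h2⟩
      · exact hnfa h1
      · exact hnfa h1
      · exact hnfa h2
      · exact hne (hinj (h1.symm.trans h2))
    rw [hNeq, Set.ncard_image_of_injOn hFinj]
    have : {b : Fin (d + 1) | a ≠ b} = Set.univ \ {a} := by
      ext b; simp [ne_comm, eq_comm]
    rw [this, Set.ncard_diff (by simp) (Set.toFinite _), Set.ncard_univ,
      Nat.card_eq_fintype_card, Fintype.card_fin, Set.ncard_singleton]
    omega
  -- now take a vertex of Z ∩ U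
  intro u hu
  obtain ⟨huZ, hudeg⟩ := hu
  have hudeg : (H.neighborSet u).ncard = d := hudeg
  have huV : u ∈ H.verts := by
    have hne : (H.neighborSet u).Nonempty :=
      Set.nonempty_of_ncard_ne_zero (by omega)
    obtain ⟨v, hv⟩ := hne
    exact H.edge_vert hv
  have hcu : (H.coe.neighborSet ⟨u, huV⟩).ncard = d := by
    rw [hcard]; exact hudeg
  obtain ⟨a, ha⟩ : ∃ a, f a = (⟨u, huV⟩ : ↥H.verts) := by
    by_contra hcon
    push_neg at hcon
    have := hint ⟨u, huV⟩ hcon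
    omega
  by_cases hall : ∀ b : Fin (d + 1), (↑(f b) : V) ∈ Z
  · -- impossible: all branch vertices inside Z
    exfalso
    set B : Set V := Set.range (fun b : Fin (d + 1) => (↑(f b) : V)) with hB
    have hvfinj : Function.Injective (fun b : Fin (d + 1) => (↑(f b) : V)) :=
      fun b b' h => hinj (Subtype.val_injective h)
    have hBcard : B.ncard = d + 1 := by
      rw [hB, ← Nat.card_coe_set_eq, Nat.card_range_of_injective hvfinj,
        Nat.card_eq_fintype_card, Fintype.card_fin]
    have hBZ : B ⊆ Z := by rintro _ ⟨b, rfl⟩; exact hall b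
    have hsat : ∀ b : Fin (d + 1), G.neighborSet (↑(f b)) = H.neighborSet (↑(f b)) := by
      intro b
      have hle : (G.neighborSet (↑(f b) : V)).ncard ≤ (H.neighborSet (↑(f b) : V)).ncard := by
        rw [hreg, ← hcard, hbr]
      exact (Set.eq_of_subset_of_ncard_le (fun v hv => H.adj_sub hv) hle (Set.toFinite _)).symm
    have hW : ∀ w ∈ Z \ B, 2 ≤ (G.neighborSet w ∩ Zᶜ).ncard := by
      intro w hw
      obtain ⟨hwZ, hwB⟩ := hw
      have h2 : (G.neighborSet w ∩ B).ncard ≤ 2 := by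
        by_cases hWB : G.neighborSet w ∩ B = ∅
        · rw [hWB]; simp
        obtain ⟨v0, hv0G, b0, hb0⟩ := Set.nonempty_iff_ne_empty.mpr hWB
        have hb0' : (↑(f b0) : V) = v0 := hb0
        have hv0' : H.Adj v0 w := by
          have hwv : w ∈ G.neighborSet (↑(f b0) : V) := by
            rw [hb0']; exact hv0G.symm
          rw [hsat b0] at hwv
          rw [← hb0']
          exact hwv
        have hwV : w ∈ H.verts := H.edge_vert hv0'.symm
        have hnb : ∀ b, f b ≠ (⟨w, hwV⟩ : ↥H.verts) := by
          intro b hbw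
          exact hwB (Set.mem_range.mpr ⟨b, show (↑(f b) : V) = w by rw [hbw]⟩)
        have hd2 : (H.neighborSet w).ncard ≤ 2 := by
          rw [← hcard ⟨w, hwV⟩]; exact hint _ hnb
        refine le_trans (Set.ncard_le_ncard ?_ (Set.toFinite _)) hd2
        rintro v ⟨hGv, b, hbv⟩
        have hbv' : (↑(f b) : V) = v := hbv
        have hwv : w ∈ G.neighborSet (↑(f b) : V) := by rw [hbv']; exact hGv.symm
        rw [hsat b] at hwv
        rw [← hbv']
        exact hwv.symm
      have h3 : (G.neighborSet w ∩ ((Z \ B) \ {w})).ncard ≤ d - 4 := by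
        have hZB2 : ((Z \ B) \ {w}).ncard = d - 4 := by
          rw [Set.ncard_diff_singleton_of_mem (show w ∈ Z \ B from ⟨hwZ, hwB⟩),
            Set.ncard_diff hBZ (Set.toFinite _), hBcard, hZcard]
          omega
        exact le_trans (Set.ncard_le_ncard Set.inter_subset_right (Set.toFinite _)) hZB2.le
      have hcover : G.neighborSet w ⊆
          ((G.neighborSet w ∩ B) ∪ (G.neighborSet w ∩ ((Z \ B) \ {w}))) ∪
            (G.neighborSet w ∩ Zᶜ) := by
        intro v hv
        by_cases hvZ : v ∈ Z
        · by_cases hvB : v ∈ B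
          · exact Or.inl (Or.inl ⟨hv, hvB⟩)
          · refine Or.inl (Or.inr ⟨hv, ⟨hvZ, hvB⟩, ?_⟩)
            intro hvw
            rw [Set.mem_singleton_iff] at hvw
            subst hvw
            exact G.irrefl hv
        · exact Or.inr ⟨hv, hvZ⟩
      have hle := Set.ncard_le_ncard hcover (Set.toFinite _)
      have hu1 := Set.ncard_union_le ((G.neighborSet w ∩ B) ∪ (G.neighborSet w ∩ ((Z \ B) \ {w})))
        (G.neighborSet w ∩ Zᶜ)
      have hu2 := Set.ncard_union_le (G.neighborSet w ∩ B) (G.neighborSet w ∩ ((Z \ B) \ {w}))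
      rw [hreg w] at hle
      omega
    set S3 : Set V := {x ∈ X | (G.neighborSet x ∩ Zᶜ).ncard = 1} with hS3
    have hS3B : S3 ⊆ B := by
      intro x hx
      by_contra hxB
      have := hW x ⟨hXZ hx.1, hxB⟩
      rw [hx.2] at this
      omega
    have hWX : Z \ B ⊆ X := by
      intro w hw
      by_contra hwX
      have hempty := hZX w ⟨hw.1, hwX⟩
      have h2 := hW w hw
      rw [hempty] at h2
      simp at h2
    have hdisj2 : Disjoint (Z \ B) S3 := by
      rw [Set.disjoint_left]
      intro x hx hxS
      exact hx.2 (hS3B hxS)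
    have hXsub : (Z \ B) ∪ S3 ⊆ X := Set.union_subset hWX (fun x hx => hx.1)
    have hcup : ((Z \ B) ∪ S3).ncard = (Z \ B).ncard + S3.ncard :=
      Set.ncard_union_eq hdisj2 (Set.toFinite _) (Set.toFinite _)
    have hle2 := Set.ncard_le_ncard hXsub (Set.toFinite _)
    have hZB : (Z \ B).ncard = d - 3 := by
      rw [Set.ncard_diff hBZ (Set.toFinite _), hBcard, hZcard]; omega
    omega
  · -- main case: some branch vertex outside Z
    push_neg at hall
    obtain ⟨c, hcZ⟩ := hall
    have hfaZ : (↑(f a) : V) ∈ Z := by rw [ha]; exact huZ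
    have hac : a ≠ c := by
      intro h
      rw [← h] at hcZ
      exact hcZ hfaZ
    set S : Set ↥H.verts := {x : ↥H.verts | (↑x : V) ∈ Z} with hS
    have key : ∀ b : Fin (d + 1), b ≠ a → ∃ z z' : ↥H.verts,
        H.coe.Adj z z' ∧ (↑z : V) ∈ Z ∧ (↑z' : V) ∉ Z ∧
        ((∃ hab : (completeGraph (Fin (d + 1))).Adj a b,
            z ∈ (P hab).support ∧ z' ∈ (P hab).support) ∨
          (∃ hbc : (completeGraph (Fin (d + 1))).Adj b c,
            z ∈ (P hbc).support ∧ z' ∈ (P hbc).support)) := by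
      intro b hba
      have hab : (completeGraph (Fin (d + 1))).Adj a b := hK (Ne.symm hba)
      by_cases hbZ : (↑(f b) : V) ∈ Z
      · have hbc : b ≠ c := by
          intro h; rw [h] at hbZ; exact hcZ hbZ
        have hbc' : (completeGraph (Fin (d + 1))).Adj b c := hK hbc
        obtain ⟨z, z', h1, h2, h3, h4, h5⟩ :=
          lb_exists_crossing S (P hbc') hbZ hcZ
        exact ⟨z, z', h1, h2, h3, Or.inr ⟨hbc', h4, h5⟩⟩
      · obtain ⟨z, z', h1, h2, h3, h4, h5⟩ :=
          lb_exists_crossing S (P hab) hfaZ hbZ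
        exact ⟨z, z', h1, h2, h3, Or.inl ⟨hab, h4, h5⟩⟩
    choose zf zf' hzadj hzZ hz'Z hzor using key
    -- crossing vertices are in X
    have hzX : ∀ b (hb : b ≠ a), (↑(zf b hb) : V) ∈ X := by
      intro b hb
      by_contra hx
      have hempty := hZX _ ⟨hzZ b hb, hx⟩
      have hmem : (↑(zf' b hb) : V) ∈ G.neighborSet (↑(zf b hb) : V) ∩ Zᶜ :=
        ⟨H.adj_sub (hzadj b hb), hz'Z b hb⟩
      rw [hempty] at hmem
      exact hmem
    -- f a is not on any path from b to c with b ≠ a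
    have hfaP : ∀ (b : Fin (d + 1)), b ≠ a →
        ∀ (hbc : (completeGraph (Fin (d + 1))).Adj b c), f a ∉ (P hbc).support := by
      intro b hb hbc hmem
      rcases hbranch hbc a hmem with h | h
      · exact hb h.symm
      · exact hac h
    -- collisions of crossing vertices only happen at f a
    have hcol : ∀ b (hb : b ≠ a) b' (hb' : b' ≠ a), b ≠ b' →
        zf b hb = zf b' hb' → zf b hb = f a := by
      intro b hb b' hb' hbb heq
      have hzc : ∀ (x : ↥H.verts), (↑x : V) ∈ Z → x ≠ f c := by
        intro x hx hxc
        rw [hxc] at hx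
        exact hcZ hx
      have hzcb : zf b hb ≠ f c := hzc _ (hzZ b hb)
      rcases hzor b hb with ⟨hab, hs1, -⟩ | ⟨hbc, hs1, -⟩
      · rcases hzor b' hb' with ⟨hab', hs2, -⟩ | ⟨hbc', hs2, -⟩
        · have hsne : s(a, b) ≠ s(a, b') := by
            intro hcontra
            rw [Sym2.eq_iff] at hcontra
            rcases hcontra with ⟨-, h⟩ | ⟨h1, h2⟩
            · exact hbb h
            · exact hb' h1.symm
          rcases hdisj hab hab' hsne _ hs1 (heq ▸ hs2) with ⟨h1 | h1, h2 | h2⟩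
          · exact h1
          · exact h1
          · exact h2
          · exact absurd (hinj (h1.symm.trans h2)) hbb
        · have hsne : s(a, b) ≠ s(b', c) := by
            intro hcontra
            rw [Sym2.eq_iff] at hcontra
            rcases hcontra with ⟨h1, -⟩ | ⟨h1, -⟩
            · exact hb' h1.symm
            · exact hac h1
          rcases hdisj hab hbc' hsne _ hs1 (heq ▸ hs2) with ⟨h1 | h1, h2 | h2⟩
          · exact h1
          · exact h1
          · exact absurd (hinj (h1.symm.trans h2)) hbb
          · exact absurd h2 hzcb
      · rcases hzor b' hb' with ⟨hab', hs2, -⟩ | ⟨hbc', hs2, -⟩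
        · have hsne : s(b, c) ≠ s(a, b') := by
            intro hcontra
            rw [Sym2.eq_iff] at hcontra
            rcases hcontra with ⟨h1, -⟩ | ⟨-, h2⟩
            · exact hb h1
            · exact hac h2.symm
          rcases hdisj hbc hab' hsne _ hs1 (heq ▸ hs2) with ⟨h1 | h1, h2 | h2⟩
          · exact h2
          · exact absurd (hinj (h1.symm.trans h2)) hbb
          · exact absurd h1 hzcb
          · exact absurd h1 hzcb
        · have hsne : s(b, c) ≠ s(b', c) := by
            intro hcontra
            rw [Sym2.eq_iff] at hcontra
            rcases hcontra with ⟨h1, -⟩ | ⟨h1, h2⟩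
            · exact hbb h1
            · exact hbb (h1.trans h2)
          rcases hdisj hbc hbc' hsne _ hs1 (heq ▸ hs2) with ⟨h1 | h1, h2 | h2⟩
          · exact absurd (hinj (h1.symm.trans h2)) hbb
          · exact absurd h2 hzcb
          · exact absurd h1 hzcb
          · exact absurd h1 hzcb
    -- the counting function
    set F : Fin (d + 1) → V := fun b => if hb : b ≠ a then (↑(zf b hb) : V) else u with hFdef
    set T : Finset (Fin (d + 1)) :=
      Finset.univ.filter (fun b => b ≠ a ∧ F b ≠ u) with hT
    have hFz : ∀ b (hb : b ≠ a), F b = (↑(zf b hb) : V) := by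
      intro b hb
      rw [hFdef]
      simp only [dif_pos hb]
    have hTinj : Set.InjOn F (↑T : Set (Fin (d + 1))) := by
      intro b hb b' hb' hbb
      simp only [hT, Finset.coe_filter, Set.mem_setOf_eq, Finset.mem_univ, true_and] at hb hb'
      by_contra hne
      rw [hFz b hb.1, hFz b' hb'.1] at hbb
      have heq : zf b hb.1 = zf b' hb'.1 := Subtype.val_injective hbb
      have := hcol b hb.1 b' hb'.1 hne heq
      apply hb.2
      rw [hFz b hb.1, this, ha]
    have hTmap : ∀ b ∈ (↑T : Set (Fin (d + 1))), F b ∈ X \ {u} := by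
      intro b hb
      simp only [hT, Finset.coe_filter, Set.mem_setOf_eq, Finset.mem_univ, true_and] at hb
      refine ⟨?_, hb.2⟩
      rw [hFz b hb.1]
      exact hzX b hb.1
    have hTle : T.card ≤ (X \ {u}).ncard := by
      rw [← Set.ncard_coe_finset]
      exact Set.ncard_le_ncard_of_injOn F hTmap hTinj (Set.toFinite _)
    have herase : (Finset.univ.erase a).card = d := by
      rw [Finset.card_erase_of_mem (Finset.mem_univ a), Finset.card_univ, Fintype.card_fin]
      omega
    have huX : u ∈ X := by
      by_contra huX
      have hTall : Finset.univ.erase a ⊆ T := by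
        intro b hb
        rw [Finset.mem_erase] at hb
        rw [hT, Finset.mem_filter]
        refine ⟨Finset.mem_univ b, hb.1, ?_⟩
        rw [hFz b hb.1]
        intro h
        exact huX (h ▸ hzX b hb.1)
      have h1 := Finset.card_le_card hTall
      have h2 : (X \ {u}).ncard = X.ncard := by
        rw [Set.diff_singleton_eq_self huX]
      omega
    refine ⟨huX, ?_⟩
    have hXd : (X \ {u}).ncard = X.ncard - 1 :=
      Set.ncard_diff_singleton_of_mem huX
    set T2 : Finset (Fin (d + 1)) :=
      (Finset.univ.erase a).filter (fun b => F b = u) with hT2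
    have hsplit : Finset.univ.erase a ⊆ T ∪ T2 := by
      intro b hb
      rw [Finset.mem_erase] at hb
      by_cases hFb : F b = u
      · exact Finset.mem_union_right _ (Finset.mem_filter.mpr
          ⟨Finset.mem_erase.mpr ⟨hb.1, hb.2⟩, hFb⟩)
      · exact Finset.mem_union_left _ (Finset.mem_filter.mpr
          ⟨Finset.mem_univ b, hb.1, hFb⟩)
    have hT2card : 2 ≤ T2.card := by
      have h1 := Finset.card_le_card hsplit
      have h2 := Finset.card_union_le T T2
      omega
    obtain ⟨b1, hb1, b2, hb2, hb12⟩ := Finset.one_lt_card.mp hT2card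
    rw [hT2, Finset.mem_filter, Finset.mem_erase] at hb1 hb2
    have hb1a : b1 ≠ a := hb1.1.1
    have hb2a : b2 ≠ a := hb2.1.1
    have hz1 : zf b1 hb1a = f a := by
      apply Subtype.val_injective
      rw [← hFz b1 hb1a, hb1.2, ha]
    have hz2 : zf b2 hb2a = f a := by
      apply Subtype.val_injective
      rw [← hFz b2 hb2a, hb2.2, ha]
    have hsupp1 : ∃ hab : (completeGraph (Fin (d + 1))).Adj a b1,
        zf' b1 hb1a ∈ (P hab).support := by
      rcases hzor b1 hb1a with ⟨hab, -, h5⟩ | ⟨hbc, h4, -⟩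
      · exact ⟨hab, h5⟩
      · exfalso
        exact hfaP b1 hb1a hbc (hz1 ▸ h4)
    have hsupp2 : ∃ hab : (completeGraph (Fin (d + 1))).Adj a b2,
        zf' b2 hb2a ∈ (P hab).support := by
      rcases hzor b2 hb2a with ⟨hab, -, h5⟩ | ⟨hbc, h4, -⟩
      · exact ⟨hab, h5⟩
      · exfalso
        exact hfaP b2 hb2a hbc (hz2 ▸ h4)
    obtain ⟨hab1, hs1⟩ := hsupp1
    obtain ⟨hab2, hs2⟩ := hsupp2
    have hne' : zf' b1 hb1a ≠ zf' b2 hb2a := by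
      intro heq
      have hsne : s(a, b1) ≠ s(a, b2) := by
        intro hcontra
        rw [Sym2.eq_iff] at hcontra
        rcases hcontra with ⟨-, h⟩ | ⟨h1, h2⟩
        · exact hb12 h
        · exact hb2a h1.symm
      have hc2 := hdisj hab1 hab2 hsne _ hs1 (heq ▸ hs2)
      rcases hc2 with ⟨h1 | h1, h2 | h2⟩
      · exact hz'Z b1 hb1a (h1 ▸ hfaZ)
      · exact hz'Z b1 hb1a (h1 ▸ hfaZ)
      · exact hz'Z b1 hb1a (h2 ▸ hfaZ)
      · exact hb12 (hinj (h1.symm.trans h2))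
    have hmem1 : (↑(zf' b1 hb1a) : V) ∈ G.neighborSet u ∩ Zᶜ := by
      constructor
      · have := H.adj_sub (hzadj b1 hb1a)
        rw [hz1, ha] at this
        exact this
      · exact hz'Z b1 hb1a
    have hmem2 : (↑(zf' b2 hb2a) : V) ∈ G.neighborSet u ∩ Zᶜ := by
      constructor
      · have := H.adj_sub (hzadj b2 hb2a)
        rw [hz2, ha] at this
        exact this
      · exact hz'Z b2 hb2a
    have hvne : (↑(zf' b1 hb1a) : V) ≠ (↑(zf' b2 hb2a) : V) := by
      intro h
      exact hne' (Subtype.val_injective h)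
    have := (Set.one_lt_ncard (Set.toFinite _)).mpr
      ⟨_, hmem1, _, hmem2, hvne⟩
    omega
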